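/- Fix β > 0 and an integer j ≥ 1. There exist a constant C and continuous functions p_1, …, p_j : (0,2π) → ℝ with |p_ℓ(θ)| ≤ C · min(θ, 2π−θ)² for all θ ∈ (0,2π) (in particular each p_ℓ is bounded and vanishes to at least second order at θ = 0 and θ = 2π), such that for every j-times continuously differentiable function f : ℝ → ℂ and every θ ∈ (0,2π), f^{(j)}(T(θ)) = Σ_{ℓ=1}^{j} F^{(ℓ)}(θ) p_ℓ(θ), where F(θ) = f(T(θ)). -/

import Mathlib

open scoped ContDiff Topology

/-- The change of variables `T(θ) = -β cot(θ/2)` mapping `(0, 2π)` onto `ℝ`. -/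
noncomputable def Tmap (β : ℝ) (θ : ℝ) : ℝ :=
  -β * (Real.cos (θ / 2) / Real.sin (θ / 2))

private lemma iterDW_eq_iterD {G : ℝ → ℂ} {s : Set ℝ} (hs : IsOpen s) {x : ℝ} (hx : x ∈ s)
    (n : ℕ) : iteratedDerivWithin n G s x = iteratedDeriv n G x := by
  rw [iteratedDerivWithin_eq_iteratedFDerivWithin, iteratedDeriv_eq_iteratedFDeriv,
    iteratedFDerivWithin_of_isOpen n hs hx]

private lemma hasDerivAt_iteratedDeriv_of_contDiffOn {G : ℝ → ℂ} {s : Set ℝ} (hs : IsOpen s)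
    {x : ℝ} (hx : x ∈ s) {n : WithTop ℕ∞} {m : ℕ} (hG : ContDiffOn ℝ n G s) (hm : (m : WithTop ℕ∞) < n) :
    HasDerivAt (iteratedDeriv m G) (iteratedDeriv (m + 1) G x) x := by
  have h1 : DifferentiableOn ℝ (iteratedDerivWithin m G s) s :=
    hG.differentiableOn_iteratedDerivWithin hm hs.uniqueDiffOn
  have hev : iteratedDerivWithin m G s =ᶠ[𝓝 x] iteratedDeriv m G := by
    filter_upwards [hs.mem_nhds hx] with a ha
    exact iterDW_eq_iterD hs ha m
  have h2 : DifferentiableAt ℝ (iteratedDeriv m G) x :=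
    (((h1 x hx).differentiableAt (hs.mem_nhds hx)).congr_of_eventuallyEq hev.symm)
  rw [iteratedDeriv_succ]
  exact h2.hasDerivAt

private lemma tmap_hasDerivAt (β : ℝ) {θ : ℝ} (h : Real.sin (θ / 2) ≠ 0) :
    HasDerivAt (Tmap β) (β / (2 * Real.sin (θ / 2) ^ 2)) θ := by
  have hhalf : HasDerivAt (fun t : ℝ => t / 2) (1 / 2) θ := by
    simpa using (hasDerivAt_id θ).div_const 2
  have hc : HasDerivAt (fun t : ℝ => Real.cos (t / 2)) (-Real.sin (θ / 2) * (1 / 2)) θ :=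
    by have := (Real.hasDerivAt_cos (θ / 2)).comp θ hhalf; exact this
  have hsn : HasDerivAt (fun t : ℝ => Real.sin (t / 2)) (Real.cos (θ / 2) * (1 / 2)) θ :=
    by have := (Real.hasDerivAt_sin (θ / 2)).comp θ hhalf; exact this
  have hd := (hc.div hsn h).const_mul (-β)
  refine hd.congr_deriv ?_
  have hpy := Real.sin_sq_add_cos_sq (θ / 2)
  have h2 : (-Real.sin (θ / 2) * (1 / 2) * Real.sin (θ / 2)
      - Real.cos (θ / 2) * (Real.cos (θ / 2) * (1 / 2))) = -(1 / 2) := by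
    linear_combination (-(1:ℝ)/2) * hpy
  rw [h2]
  field_simp

private lemma tmap_contDiffOn (β : ℝ) :
    ContDiffOn ℝ ∞ (Tmap β) (Set.Ioo 0 (2 * Real.pi)) := by
  have hsin : ∀ θ ∈ Set.Ioo (0:ℝ) (2 * Real.pi), Real.sin (θ / 2) ≠ 0 := by
    intro θ hθ
    exact ne_of_gt (Real.sin_pos_of_pos_of_lt_pi (by linarith [hθ.1]) (by linarith [hθ.2]))
  exact contDiffOn_const.mul
    (((Real.contDiff_cos.comp (contDiff_id.div_const 2)).contDiffOn).div
      ((Real.contDiff_sin.comp (contDiff_id.div_const 2)).contDiffOn) hsin)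


private lemma tmap_key (β : ℝ) (hβ : 0 < β) :
    ∀ j : ℕ, 1 ≤ j → ∃ g : ℕ → ℝ → ℝ,
      (∀ ℓ, ContDiff ℝ ∞ (g ℓ)) ∧
      (∀ ℓ, ℓ ∉ Finset.Icc 1 j → ∀ θ, g ℓ θ = 0) ∧
      ∀ f : ℝ → ℂ, ContDiff ℝ j f → ∀ θ ∈ Set.Ioo (0 : ℝ) (2 * Real.pi),
        iteratedDeriv j f (Tmap β θ) =
          ∑ ℓ ∈ Finset.Icc 1 j,
            iteratedDeriv ℓ (fun θ' => f (Tmap β θ')) θ *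
              ((Real.sin (θ / 2) ^ 2 * g ℓ θ : ℝ) : ℂ) := by
  intro j hj
  induction j, hj using Nat.le_induction with
  | base =>
    refine ⟨fun ℓ _ => if ℓ = 1 then 2 / β else 0, fun ℓ => contDiff_const, ?_, ?_⟩
    · intro ℓ hℓ θ
      simp only [Finset.mem_Icc] at hℓ
      have : ℓ ≠ 1 := by omega
      simp [this]
    · intro f hf θ hθ
      have hsne : Real.sin (θ / 2) ≠ 0 :=
        ne_of_gt (Real.sin_pos_of_pos_of_lt_pi (by linarith [hθ.1]) (by linarith [hθ.2]))
      have hT := tmap_hasDerivAt β hsne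
      have hf' : HasDerivAt f (deriv f (Tmap β θ)) (Tmap β θ) :=
        ((hf.differentiable (by norm_num)).differentiableAt).hasDerivAt
      have hF : HasDerivAt (fun θ' => f (Tmap β θ'))
          ((β / (2 * Real.sin (θ / 2) ^ 2)) • deriv f (Tmap β θ)) θ := hf'.scomp θ hT
      rw [show Finset.Icc 1 1 = {1} by rfl, Finset.sum_singleton, iteratedDeriv_one,
        iteratedDeriv_one, hF.deriv]
      have hgv : (fun (ℓ : ℕ) (_ : ℝ) => if ℓ = 1 then 2 / β else 0) 1 θ = 2 / β := by norm_num
      rw [hgv, Complex.real_smul, mul_comm, ← mul_assoc, ← Complex.ofReal_mul]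
      have : Real.sin (θ / 2) ^ 2 * (2 / β) * (β / (2 * Real.sin (θ / 2) ^ 2)) = 1 := by
        field_simp
      rw [this, Complex.ofReal_one, one_mul]
  | succ j hj IH =>
    obtain ⟨g, hg, hgvan, hgid⟩ := IH
    set p : ℕ → ℝ → ℝ := fun ℓ θ => Real.sin (θ / 2) ^ 2 * g ℓ θ with hp_def
    have hssq : ContDiff ℝ ∞ (fun θ : ℝ => Real.sin (θ / 2) ^ 2) :=
      (Real.contDiff_sin.comp (contDiff_id.div_const 2)).pow 2
    have hp : ∀ ℓ, ContDiff ℝ ∞ (p ℓ) := fun ℓ => hssq.mul (hg ℓ)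
    have hp' : ∀ ℓ, ContDiff ℝ ∞ (deriv (p ℓ)) := fun ℓ =>
      (contDiff_infty_iff_deriv.mp (hp ℓ)).2
    have hpzero : ∀ ℓ, ℓ ∉ Finset.Icc 1 j → p ℓ = fun _ => 0 := by
      intro ℓ hℓ
      funext t
      simp [hp_def, hgvan ℓ hℓ t]
    refine ⟨fun ℓ θ => (2 / β) * (p (ℓ - 1) θ + deriv (p ℓ) θ), ?_, ?_, ?_⟩
    · exact fun ℓ => contDiff_const.mul ((hp (ℓ - 1)).add (hp' ℓ))
    · intro ℓ hℓ θ
      simp only [Finset.mem_Icc] at hℓ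
      have h1 : (ℓ - 1) ∉ Finset.Icc 1 j := by simp only [Finset.mem_Icc]; omega
      have h2 : ℓ ∉ Finset.Icc 1 j := by simp only [Finset.mem_Icc]; omega
      show 2 / β * (p (ℓ - 1) θ + deriv (p ℓ) θ) = 0
      rw [hpzero _ h1, hpzero _ h2]
      simp
    · intro f hf θ₀ hθ₀
      have hsne : Real.sin (θ₀ / 2) ≠ 0 :=
        ne_of_gt (Real.sin_pos_of_pos_of_lt_pi (by linarith [hθ₀.1]) (by linarith [hθ₀.2]))
      set F : ℝ → ℂ := fun θ' => f (Tmap β θ') with hF_def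
      set S : Set ℝ := Set.Ioo (0 : ℝ) (2 * Real.pi) with hS_def
      have hSopen : IsOpen S := isOpen_Ioo
      have hFC : ContDiffOn ℝ (j + 1 : ℕ) F S :=
        hf.comp_contDiffOn ((tmap_contDiffOn β).of_le (by exact_mod_cast le_top))
      -- derivative of each iterated derivative of F
      have hD : ∀ ℓ ∈ Finset.Icc 1 j,
          HasDerivAt (iteratedDeriv ℓ F) (iteratedDeriv (ℓ + 1) F θ₀) θ₀ := by
        intro ℓ hℓ
        have hlj : ℓ ≤ j := (Finset.mem_Icc.mp hℓ).2
        exact hasDerivAt_iteratedDeriv_of_contDiffOn hSopen hθ₀ hFC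
          (by exact_mod_cast Nat.lt_succ_of_le hlj)
      have hPd : ∀ ℓ, HasDerivAt (fun θ => ((p ℓ θ : ℝ) : ℂ)) (((deriv (p ℓ) θ₀ : ℝ)) : ℂ) θ₀ :=
        fun ℓ => (((hp ℓ).differentiable (by simp)).differentiableAt.hasDerivAt).ofReal_comp
      have hsum : HasDerivAt
          (fun θ => ∑ ℓ ∈ Finset.Icc 1 j, iteratedDeriv ℓ F θ * ((p ℓ θ : ℝ) : ℂ))
          (∑ ℓ ∈ Finset.Icc 1 j, (iteratedDeriv (ℓ + 1) F θ₀ * ((p ℓ θ₀ : ℝ) : ℂ)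
            + iteratedDeriv ℓ F θ₀ * ((deriv (p ℓ) θ₀ : ℝ) : ℂ))) θ₀ :=
        HasDerivAt.fun_sum fun ℓ hℓ => (hD ℓ hℓ).mul (hPd ℓ)
      have hT := tmap_hasDerivAt β hsne
      have hfdiff : Differentiable ℝ (iteratedDeriv j f) :=
        hf.differentiable_iteratedDeriv j (by exact_mod_cast Nat.lt_succ_self j)
      have hfj : HasDerivAt (iteratedDeriv j f) (iteratedDeriv (j + 1) f (Tmap β θ₀))
          (Tmap β θ₀) := by
        rw [iteratedDeriv_succ]
        exact (hfdiff (Tmap β θ₀)).hasDerivAt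
      have hL : HasDerivAt (fun θ => iteratedDeriv j f (Tmap β θ))
          ((β / (2 * Real.sin (θ₀ / 2) ^ 2)) • iteratedDeriv (j + 1) f (Tmap β θ₀)) θ₀ :=
        hfj.scomp θ₀ hT
      have hev : (fun θ => iteratedDeriv j f (Tmap β θ)) =ᶠ[𝓝 θ₀]
          (fun θ => ∑ ℓ ∈ Finset.Icc 1 j, iteratedDeriv ℓ F θ * ((p ℓ θ : ℝ) : ℂ)) := by
        filter_upwards [hSopen.mem_nhds hθ₀] with a ha
        exact hgid f (hf.of_le (by exact_mod_cast Nat.le_succ j)) a ha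
      have hL2 : HasDerivAt
          (fun θ => ∑ ℓ ∈ Finset.Icc 1 j, iteratedDeriv ℓ F θ * ((p ℓ θ : ℝ) : ℂ))
          ((β / (2 * Real.sin (θ₀ / 2) ^ 2)) • iteratedDeriv (j + 1) f (Tmap β θ₀)) θ₀ :=
        hL.congr_of_eventuallyEq hev.symm
      have hkey := hL2.unique hsum
      -- solve for the (j+1)-st derivative
      set c : ℂ := ((Real.sin (θ₀ / 2) ^ 2 * (2 / β) : ℝ) : ℂ) with hc_def
      have hcD : c * ((β / (2 * Real.sin (θ₀ / 2) ^ 2) : ℝ) : ℂ) = 1 := by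
        rw [← Complex.ofReal_mul]
        norm_cast
        field_simp
      have hmain : iteratedDeriv (j + 1) f (Tmap β θ₀) =
          c * ∑ ℓ ∈ Finset.Icc 1 j, (iteratedDeriv (ℓ + 1) F θ₀ * ((p ℓ θ₀ : ℝ) : ℂ)
            + iteratedDeriv ℓ F θ₀ * ((deriv (p ℓ) θ₀ : ℝ) : ℂ)) := by
        rw [← hkey, Complex.real_smul, ← mul_assoc, hcD, one_mul]
      rw [hmain]
      rw [Finset.mul_sum]
      simp only [mul_add]
      rw [Finset.sum_add_distrib]
      -- now reindex
      have hshift : ∑ ℓ ∈ Finset.Icc 1 j, c * (iteratedDeriv (ℓ + 1) F θ₀ * ((p ℓ θ₀ : ℝ) : ℂ))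
          = ∑ ℓ ∈ Finset.Icc 1 (j + 1),
              c * (iteratedDeriv ℓ F θ₀ * ((p (ℓ - 1) θ₀ : ℝ) : ℂ)) := by
        have himg : Finset.Icc 1 (j + 1) = Finset.image (· + 1) (Finset.Icc 0 j) := by
          ext a; simp only [Finset.mem_Icc, Finset.mem_image]; constructor
          · intro h; exact ⟨a - 1, by omega, by omega⟩
          · rintro ⟨b, hb, rfl⟩; omega
        rw [himg, Finset.sum_image (by intro a _ b _ h; simp only at h; omega)]
        simp only [Nat.add_sub_cancel]
        have h0 : Finset.Icc 0 j = insert 0 (Finset.Icc 1 j) := by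
          ext a; simp only [Finset.mem_Icc, Finset.mem_insert]; omega
        rw [h0, Finset.sum_insert (by simp)]
        have : p 0 θ₀ = 0 := by rw [hpzero 0 (by simp)]
        simp [this]
      have hext : ∑ ℓ ∈ Finset.Icc 1 j, c * (iteratedDeriv ℓ F θ₀ * ((deriv (p ℓ) θ₀ : ℝ) : ℂ))
          = ∑ ℓ ∈ Finset.Icc 1 (j + 1),
              c * (iteratedDeriv ℓ F θ₀ * ((deriv (p ℓ) θ₀ : ℝ) : ℂ)) := by
        apply Finset.sum_subset
        · intro a ha; simp only [Finset.mem_Icc] at *; omega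
        · intro a ha hna
          have : a ∉ Finset.Icc 1 j := hna
          rw [hpzero a this]
          simp
      rw [hshift, hext, ← Finset.sum_add_distrib]
      apply Finset.sum_congr rfl
      intro ℓ hℓ
      simp only [hc_def, hp_def]
      push_cast
      ring

/-- **Chain-rule structure of derivatives under the map `T`.** Fix `β > 0` and
an integer `j ≥ 1`. There exist a constant `C` and continuous functions
`p_1, …, p_j : (0,2π) → ℝ` with `|p_ℓ(θ)| ≤ C · min(θ, 2π−θ)²` on `(0,2π)`
(so each `p_ℓ` is bounded and vanishes to second order at `0` and `2π`), such
that for every `C^j` function `f : ℝ → ℂ` and every `θ ∈ (0,2π)`,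
`f^{(j)}(T(θ)) = ∑_{ℓ=1}^j F^{(ℓ)}(θ) p_ℓ(θ)` where `F(θ) = f(T(θ))`. -/
theorem deriv_through_Tmap (β : ℝ) (hβ : 0 < β) (j : ℕ) (hj : 1 ≤ j) :
    ∃ C : ℝ, 0 < C ∧ ∃ p : ℕ → ℝ → ℝ,
      (∀ ℓ ∈ Finset.Icc 1 j, ContinuousOn (p ℓ) (Set.Ioo 0 (2 * Real.pi))) ∧
      (∀ ℓ ∈ Finset.Icc 1 j, ∀ θ ∈ Set.Ioo (0 : ℝ) (2 * Real.pi),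
        |p ℓ θ| ≤ C * (min θ (2 * Real.pi - θ)) ^ 2) ∧
      ∀ f : ℝ → ℂ, ContDiff ℝ j f → ∀ θ ∈ Set.Ioo (0 : ℝ) (2 * Real.pi),
        iteratedDeriv j f (Tmap β θ) =
          ∑ ℓ ∈ Finset.Icc 1 j,
            iteratedDeriv ℓ (fun θ' => f (Tmap β θ')) θ * ((p ℓ θ : ℝ) : ℂ) := by
  obtain ⟨g, hg, hgvan, hgid⟩ := tmap_key β hβ j hj
  have hssq : ContDiff ℝ ∞ (fun θ : ℝ => Real.sin (θ / 2) ^ 2) :=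
    (Real.contDiff_sin.comp (contDiff_id.div_const 2)).pow 2
  have hbd : ∀ ℓ : ℕ, ∃ c : ℝ, ∀ x ∈ Set.Icc (0 : ℝ) (2 * Real.pi), |g ℓ x| ≤ c := by
    intro ℓ
    obtain ⟨c, hc⟩ := isCompact_Icc.exists_bound_of_continuousOn
      ((hg ℓ).continuous.continuousOn)
    exact ⟨c, fun x hx => by simpa [Real.norm_eq_abs] using hc x hx⟩
  choose cb hcb using hbd
  set C : ℝ := 1 + ∑ ℓ ∈ Finset.Icc 1 j, |cb ℓ| with hC_def
  have hCpos : 0 < C := by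
    have : (0 : ℝ) ≤ ∑ ℓ ∈ Finset.Icc 1 j, |cb ℓ| :=
      Finset.sum_nonneg fun i _ => abs_nonneg _
    simp only [hC_def]; linarith
  refine ⟨C, hCpos, fun ℓ θ => Real.sin (θ / 2) ^ 2 * g ℓ θ, ?_, ?_, ?_⟩
  · exact fun ℓ _ => (hssq.mul (hg ℓ)).continuous.continuousOn
  · intro ℓ hℓ θ hθ
    have hθIcc : θ ∈ Set.Icc (0 : ℝ) (2 * Real.pi) := ⟨le_of_lt hθ.1, le_of_lt hθ.2⟩
    have hs_nonneg : 0 ≤ Real.sin (θ / 2) :=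
      Real.sin_nonneg_of_nonneg_of_le_pi (by linarith [hθ.1]) (by linarith [hθ.2])
    have h1 : Real.sin (θ / 2) ≤ θ :=
      le_trans (Real.sin_lt (by linarith [hθ.1])).le (by linarith [hθ.1])
    have h2 : Real.sin (θ / 2) ≤ 2 * Real.pi - θ := by
      have hrw : Real.sin (θ / 2) = Real.sin (Real.pi - θ / 2) := (Real.sin_pi_sub _).symm
      rw [hrw]
      have hpos : 0 < Real.pi - θ / 2 := by linarith [hθ.2]
      exact le_trans (Real.sin_lt hpos).le (by linarith [hθ.1, Real.pi_pos])
    have hmin : Real.sin (θ / 2) ≤ min θ (2 * Real.pi - θ) := le_min h1 h2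
    have hsq : Real.sin (θ / 2) ^ 2 ≤ (min θ (2 * Real.pi - θ)) ^ 2 :=
      pow_le_pow_left₀ hs_nonneg hmin 2
    have hgleC : |g ℓ θ| ≤ C := by
      refine le_trans (hcb ℓ θ hθIcc) (le_trans (le_abs_self _) ?_)
      have hsingle : |cb ℓ| ≤ ∑ i ∈ Finset.Icc 1 j, |cb i| :=
        Finset.single_le_sum (fun i _ => abs_nonneg (cb i)) hℓ
      simp only [hC_def]; linarith
    calc |Real.sin (θ / 2) ^ 2 * g ℓ θ| = Real.sin (θ / 2) ^ 2 * |g ℓ θ| := by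
          rw [abs_mul, abs_of_nonneg (sq_nonneg _)]
      _ ≤ Real.sin (θ / 2) ^ 2 * C :=
          mul_le_mul_of_nonneg_left hgleC (sq_nonneg _)
      _ ≤ C * (min θ (2 * Real.pi - θ)) ^ 2 := by
          rw [mul_comm]
          exact mul_le_mul_of_nonneg_left hsq hCpos.le
  · exact hgid
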